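/- (Determinant of compound lattices) Let Λ be a lattice in ℝ^n and 1 ≤ p ≤ n−1. Let Λ_p be the lattice in ℝ^N, N = C(n,p), generated by all exterior products x_1 ∧ ⋯ ∧ x_p with x_1,…,x_p ∈ Λ (identified with ℝ^N via the standard basis of Λ^p(ℝ^n)). Then d(Λ_p) = d(Λ)^P with P = C(n−1, p−1). -/

import Mathlib

/-- Index set for coordinates of the `p`-th exterior power of `ℝⁿ`:
subsets of `{1,…,n}` of size `p` (equivalently increasing `p`-tuples). -/
abbrev WedgeIdx (n p : ℕ) := {s : Finset (Fin n) // s.card = p}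

/-- The exterior product `x₁ ∧ ⋯ ∧ x_p`, identified with a vector of `ℝ^N`,
`N = C(n,p)`, via Plücker coordinates in the standard basis: the coordinate at
an increasing tuple `i₁ < ⋯ < i_p` is the corresponding `p × p` minor. -/
noncomputable def wedge (n p : ℕ) (v : Fin p → Fin n → ℝ) : WedgeIdx n p → ℝ :=
  fun s => Matrix.det (Matrix.of fun i j => v i ((s.1.orderIsoOfFin s.2 j : Fin n)))

/-- The lattice spanned over ℤ by the rows of `B` (general finite index type). -/
def latticeOfI {ι : Type*} [Fintype ι] (B : ι → ι → ℝ) : Set (ι → ℝ) :=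
  {x | ∃ z : ι → ℤ, x = ∑ i, (z i : ℝ) • B i}

/-- The `p`-th compound lattice `Λ_p`: the ℤ-span of all exterior products of
`p` lattice vectors. -/
def compoundLattice (n p : ℕ) (L : Set (Fin n → ℝ)) : Set (WedgeIdx n p → ℝ) :=
  (Submodule.span ℤ
    {w : WedgeIdx n p → ℝ | ∃ v : Fin p → Fin n → ℝ,
      (∀ i, v i ∈ L) ∧ w = wedge n p v} : Set (WedgeIdx n p → ℝ))

open Finset Matrix Equiv

namespace CompoundDet

variable {n p : ℕ}

/-- The increasing enumeration of a `p`-subset of `Fin n`. -/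
def emb (s : WedgeIdx n p) : Fin p → Fin n := fun j => (s.1.orderIsoOfFin s.2 j : Fin n)

lemma emb_strictMono (s : WedgeIdx n p) : StrictMono (emb s) := fun _ _ h =>
  (s.1.orderIsoOfFin s.2).strictMono h

lemma emb_injective (s : WedgeIdx n p) : Function.Injective (emb s) :=
  (emb_strictMono s).injective

lemma emb_mem (s : WedgeIdx n p) (j : Fin p) : emb s j ∈ s.1 :=
  (s.1.orderIsoOfFin s.2 j).2

lemma emb_image (s : WedgeIdx n p) : Finset.image (emb s) Finset.univ = s.1 := by
  apply Finset.eq_of_subset_of_card_le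
  · intro a ha
    rcases Finset.mem_image.1 ha with ⟨j, _, rfl⟩
    exact emb_mem s j
  · rw [Finset.card_image_of_injective _ (emb_injective s), Finset.card_univ,
      Fintype.card_fin, s.2]

lemma emb_surjOn (s : WedgeIdx n p) {a : Fin n} (ha : a ∈ s.1) : ∃ j, emb s j = a := by
  have := (emb_image s) ▸ ha
  rcases Finset.mem_image.1 this with ⟨j, _, hj⟩
  exact ⟨j, hj⟩

/-- Cauchy–Binet formula. -/
lemma cauchyBinet (A : Matrix (Fin p) (Fin n) ℝ) (Bm : Matrix (Fin n) (Fin p) ℝ) :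
    (A * Bm).det = ∑ s : WedgeIdx n p,
      (A.submatrix id (emb s)).det * (Bm.submatrix (emb s) id).det := by
  classical
  have h1 : (A * Bm).det
      = ∑ f : Fin p → Fin n, ∑ σ : Equiv.Perm (Fin p),
          ((Equiv.Perm.sign σ : ℤ) : ℝ) * ∏ i, A (σ i) (f i) * Bm (f i) i := by
    simp only [Matrix.det_apply', Matrix.mul_apply, Finset.prod_univ_sum, Finset.mul_sum,
      Fintype.piFinset_univ]
    rw [Finset.sum_comm]
  have h2 : ∀ f : Fin p → Fin n,
      (∑ σ : Equiv.Perm (Fin p),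
        ((Equiv.Perm.sign σ : ℤ) : ℝ) * ∏ i, A (σ i) (f i) * Bm (f i) i)
      = (A.submatrix id f).det * ∏ i, Bm (f i) i := by
    intro f
    rw [Matrix.det_apply', Finset.sum_mul]
    refine Finset.sum_congr rfl fun σ _ => ?_
    rw [mul_assoc, Finset.prod_mul_distrib]
    rfl
  rw [h1]
  simp only [h2]
  -- drop non-injective f
  have h3 : ∑ f : Fin p → Fin n, (A.submatrix id f).det * ∏ i, Bm (f i) i
      = ∑ f ∈ Finset.univ.filter (fun f : Fin p → Fin n => Function.Injective f),
          (A.submatrix id f).det * ∏ i, Bm (f i) i := by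
    refine (Finset.sum_subset (Finset.filter_subset _ _) fun f _ hf => ?_).symm
    have hninj : ¬ Function.Injective f := by simpa using hf
    rw [Function.not_injective_iff] at hninj
    rcases hninj with ⟨i, j, hij, hne⟩
    have : (A.submatrix id f).det = 0 :=
      Matrix.det_zero_of_column_eq hne (fun k => by simp [hij])
    rw [this, zero_mul]
  rw [h3]
  -- reindex injective functions by (subset, permutation)
  have h4 : Finset.univ.filter (fun f : Fin p → Fin n => Function.Injective f)
      = Finset.image (fun x : WedgeIdx n p × Equiv.Perm (Fin p) => emb x.1 ∘ x.2)
          Finset.univ := by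
    ext f
    simp only [Finset.mem_filter, Finset.mem_univ, true_and, Finset.mem_image]
    constructor
    · intro hf
      have hcard : (Finset.image f Finset.univ).card = p := by
        rw [Finset.card_image_of_injective _ hf, Finset.card_univ, Fintype.card_fin]
      set s : WedgeIdx n p := ⟨Finset.image f Finset.univ, hcard⟩ with hs
      have hmem : ∀ i, f i ∈ s.1 := fun i => Finset.mem_image_of_mem f (Finset.mem_univ i)
      set g : Fin p → Fin p :=
        fun i => (s.1.orderIsoOfFin s.2).symm ⟨f i, hmem i⟩ with hg
      have happ : ∀ i, (s.1.orderIsoOfFin s.2) (g i) = ⟨f i, hmem i⟩ := fun i =>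
        OrderIso.apply_symm_apply _ _
      have hginj : Function.Injective g := by
        intro a b hab
        apply hf
        have := congrArg (fun u => ((s.1.orderIsoOfFin s.2) u : Fin n)) hab
        simpa [happ] using this
      have hgbij : Function.Bijective g := Finite.injective_iff_bijective.1 hginj
      refine ⟨⟨s, Equiv.ofBijective g hgbij⟩, ?_⟩
      funext i
      show emb s (g i) = f i
      show ((s.1.orderIsoOfFin s.2) (g i) : Fin n) = f i
      rw [happ i]
    · rintro ⟨x, rfl⟩
      exact (emb_injective x.1).comp x.2.injective
  rw [h4, Finset.sum_image ?_]
  swap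
  · rintro ⟨s, pi⟩ - ⟨t, rho⟩ - hxy
    have himg : ∀ (u : WedgeIdx n p) (π : Equiv.Perm (Fin p)),
        Finset.image (emb u ∘ π) Finset.univ = u.1 := by
      intro u π
      rw [← Finset.image_image, Finset.image_univ_equiv, emb_image]
    have hst : s = t := Subtype.ext (by rw [← himg s pi, ← himg t rho]; exact congrArg (Finset.image · Finset.univ) hxy)
    subst hst
    refine Prod.ext rfl ?_
    apply Equiv.ext
    intro i
    exact emb_injective s (congrFun hxy i)
  rw [Fintype.sum_prod_type]
  refine Finset.sum_congr rfl fun s _ => ?_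
  have hterm : ∀ π : Equiv.Perm (Fin p),
      (A.submatrix id (emb s ∘ π)).det * ∏ i, Bm ((emb s ∘ π) i) i
      = (A.submatrix id (emb s)).det *
          (((Equiv.Perm.sign π : ℤ) : ℝ) * ∏ i, (Bm.submatrix (emb s) id) (π i) i) := by
    intro π
    have : A.submatrix id (emb s ∘ π) = (A.submatrix id (emb s)).submatrix id π := by
      rw [Matrix.submatrix_submatrix]
      rfl
    rw [this, Matrix.det_permute']
    simp only [Matrix.submatrix_apply, Function.comp_apply, id_eq]
    ring
  calc ∑ π : Equiv.Perm (Fin p),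
      (A.submatrix id (emb s ∘ π)).det * ∏ i, Bm ((emb s ∘ π) i) i
      = ∑ π : Equiv.Perm (Fin p), (A.submatrix id (emb s)).det *
          (((Equiv.Perm.sign π : ℤ) : ℝ) * ∏ i, (Bm.submatrix (emb s) id) (π i) i) :=
        Finset.sum_congr rfl fun π _ => hterm π
    _ = (A.submatrix id (emb s)).det * (Bm.submatrix (emb s) id).det := by
        rw [← Finset.mul_sum, Matrix.det_apply' (Bm.submatrix (emb s) id)]

/-- The `p`-th compound matrix. -/
noncomputable def cmpd (n p : ℕ) (M : Matrix (Fin n) (Fin n) ℝ) :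
    Matrix (WedgeIdx n p) (WedgeIdx n p) ℝ :=
  Matrix.of fun s t => (M.submatrix (emb s) (emb t)).det

lemma cmpd_mul (M N : Matrix (Fin n) (Fin n) ℝ) :
    cmpd n p (M * N) = cmpd n p M * cmpd n p N := by
  ext s t
  have h : (M * N).submatrix (emb s) (emb t)
      = M.submatrix (emb s) id * N.submatrix id (emb t) :=
    Matrix.submatrix_mul M N (emb s) id (emb t) Function.bijective_id
  show ((M * N).submatrix (emb s) (emb t)).det = _
  rw [h, cauchyBinet]
  simp only [Matrix.mul_apply, Matrix.submatrix_submatrix, cmpd]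
  rfl

/-- Colex comparison of the index sets from a permutation domination. -/
lemma colex_le_of_perm_le {s t : WedgeIdx n p} (σ : Equiv.Perm (Fin p))
    (h : ∀ i, emb s (σ i) ≤ emb t i) : toColex s.1 ≤ toColex t.1 := by
  rw [Finset.Colex.toColex_le_toColex]
  intro a ha hat
  obtain ⟨k, hk⟩ := emb_surjOn s ha
  -- the elements `emb t i` for `σ i ≥ k` are `> a` and lie in `t`
  set I : Finset (Fin p) := Finset.univ.filter (fun i => k ≤ σ i) with hI
  have hIcard : I.card = p - k := by
    have himg : Finset.image σ.symm (Finset.Ici k) = I := by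
      ext i
      simp only [hI, Finset.mem_image, Finset.mem_filter, Finset.mem_univ, true_and,
        Finset.mem_Ici]
      constructor
      · rintro ⟨j, hj, rfl⟩; simpa using hj
      · intro hi; exact ⟨σ i, hi, by simp⟩
    rw [← himg, Finset.card_image_of_injective _ σ.symm.injective, Fin.card_Ici]
  set Ab : Finset (Fin n) := t.1.filter (fun b => a < b) with hAb
  set Bb : Finset (Fin n) := s.1.filter (fun b => a < b) with hBb
  have hsub1 : Finset.image (emb t) I ⊆ Ab := by
    intro b hb
    rcases Finset.mem_image.1 hb with ⟨i, hi, rfl⟩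
    have hki : k ≤ σ i := (Finset.mem_filter.1 hi).2
    have h1 : a ≤ emb t i := hk ▸ (le_trans ((emb_strictMono s).monotone hki) (h i))
    have h2 : emb t i ≠ a := fun he => hat (he ▸ emb_mem t i)
    exact Finset.mem_filter.2 ⟨emb_mem t i, lt_of_le_of_ne h1 (Ne.symm h2)⟩
  have hAcard : p - k ≤ Ab.card := by
    calc p - k = I.card := hIcard.symm
    _ = (Finset.image (emb t) I).card :=
        (Finset.card_image_of_injective _ (emb_injective t)).symm
    _ ≤ Ab.card := Finset.card_le_card hsub1
  have hsub2 : Bb ⊆ Finset.image (emb s) (Finset.Ioi k) := by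
    intro b hb
    rcases Finset.mem_filter.1 hb with ⟨hbs, hab⟩
    obtain ⟨j, rfl⟩ := emb_surjOn s hbs
    refine Finset.mem_image.2 ⟨j, ?_, rfl⟩
    rw [Finset.mem_Ioi]
    exact (emb_strictMono s).lt_iff_lt.1 (hk ▸ hab)
  have hBcard : Bb.card ≤ p - 1 - k := by
    calc Bb.card ≤ (Finset.image (emb s) (Finset.Ioi k)).card := Finset.card_le_card hsub2
    _ ≤ (Finset.Ioi k).card := Finset.card_image_le
    _ = p - 1 - k := Fin.card_Ioi k
  have hlt : Bb.card < Ab.card := by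
    refine lt_of_le_of_lt hBcard (lt_of_lt_of_le ?_ hAcard)
    have hk2 : (k : ℕ) < p := k.2
    omega
  have hnsub : ¬ Ab ⊆ Bb := fun hsub => absurd (Finset.card_le_card hsub) (not_le.2 hlt)
  obtain ⟨b, hbA, hbB⟩ := Finset.not_subset.1 hnsub
  rcases Finset.mem_filter.1 hbA with ⟨hbt, hab⟩
  refine ⟨b, hbt, ?_, le_of_lt hab⟩
  intro hbs
  exact hbB (Finset.mem_filter.2 ⟨hbs, hab⟩)

/-- Determinant of a matrix that is triangular with respect to an injective map
into a linear order. -/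
lemma det_eq_prod_diag_of_triangular {m : Type*} [Fintype m] [DecidableEq m]
    {α : Type*} [LinearOrder α] (M : Matrix m m ℝ) (b : m → α)
    (hb : Function.Injective b) (h : ∀ i j, b j < b i → M i j = 0) :
    M.det = ∏ i, M i i := by
  have hbt : M.BlockTriangular b := h
  rw [hbt.det, Finset.prod_image (f := fun a => (M.toSquareBlock b a).det)
    (g := b) (fun x _ y _ hxy => hb hxy)]
  refine Finset.prod_congr rfl fun i _ => ?_
  haveI : Unique {a // b a = b i} :=
    ⟨⟨⟨i, rfl⟩⟩, fun j => Subtype.ext (hb j.2)⟩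
  rw [Matrix.det_unique]
  show M ((default : {a // b a = b i}) : m) ((default : {a // b a = b i}) : m) = M i i
  have hd : ((default : {a // b a = b i}) : m) = i := by
    have : (default : {a // b a = b i}) = ⟨i, rfl⟩ := Subsingleton.elim _ _
    rw [this]
  rw [hd]

/-- Determinant of the compound of an upper triangular matrix. -/
lemma cmpd_det_of_ut (M : Matrix (Fin n) (Fin n) ℝ)
    (hM : ∀ i j : Fin n, j < i → M i j = 0) :
    (cmpd n p M).det = ∏ s : WedgeIdx n p, ∏ j : Fin p, M (emb s j) (emb s j) := by
  classical
  have hmain : (cmpd n p M).det = ∏ s : WedgeIdx n p, (cmpd n p M) s s := by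
    refine det_eq_prod_diag_of_triangular _ (fun s => toColex s.1)
      (fun s t hst => Subtype.ext (toColex_inj.1 hst)) ?_
    intro s t hlt
    show ((M.submatrix (emb s) (emb t)).det) = 0
    by_contra hne
    rw [Matrix.det_apply'] at hne
    obtain ⟨σ, -, hσ⟩ := Finset.exists_ne_zero_of_sum_ne_zero hne
    have hprod : ∀ i, M (emb s (σ i)) (emb t i) ≠ 0 := by
      intro i
      have : (∏ i, (M.submatrix (emb s) (emb t)) (σ i) i) ≠ 0 := by
        intro h0; rw [h0, mul_zero] at hσ; exact hσ rfl
      exact fun h0 => (Finset.prod_ne_zero_iff.1 this i (Finset.mem_univ i))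
        (by simpa using h0)
    have hle : ∀ i, emb s (σ i) ≤ emb t i := fun i =>
      le_of_not_gt (fun hlt' => hprod i (hM _ _ hlt'))
    exact absurd (colex_le_of_perm_le σ hle) (not_le.2 hlt)
  rw [hmain]
  refine Finset.prod_congr rfl fun s _ => ?_
  show (M.submatrix (emb s) (emb s)).det = _
  refine det_eq_prod_diag_of_triangular _ (emb s) (emb_injective s) ?_
  intro i j hij
  exact hM _ _ hij

lemma count_mem (hp : 1 ≤ p) (i : Fin n) :
    (Finset.univ.filter (fun s : WedgeIdx n p => i ∈ s.1)).card
      = Nat.choose (n - 1) (p - 1) := by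
  classical
  have hcard : (Finset.univ.erase i).card = n - 1 := by
    rw [Finset.card_erase_of_mem (Finset.mem_univ i), Finset.card_univ, Fintype.card_fin]
  rw [← hcard, ← Finset.card_powersetCard (p - 1) (Finset.univ.erase i)]
  · refine Finset.card_bij' (fun s _ => s.1.erase i)
      (fun u hu => ⟨insert i u, ?_⟩) ?_ ?_ ?_ ?_
    · rcases Finset.mem_powersetCard.1 hu with ⟨hsub, hcard⟩
      have hiu : i ∉ u := fun hiu => (Finset.mem_erase.1 (hsub hiu)).1 rfl
      rw [Finset.card_insert_of_notMem hiu, hcard]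
      omega
    · intro s hs
      rcases Finset.mem_filter.1 hs with ⟨-, his⟩
      refine Finset.mem_powersetCard.2 ⟨?_, ?_⟩
      · exact Finset.erase_subset_erase i (Finset.subset_univ _)
      · rw [Finset.card_erase_of_mem his, s.2]
    · intro u hu
      refine Finset.mem_filter.2 ⟨Finset.mem_univ _, Finset.mem_insert_self i u⟩
    · intro s hs
      rcases Finset.mem_filter.1 hs with ⟨-, his⟩
      exact Subtype.ext (Finset.insert_erase his)
    · intro u hu
      rcases Finset.mem_powersetCard.1 hu with ⟨hsub, -⟩
      have hiu : i ∉ u := fun hiu => (Finset.mem_erase.1 (hsub hiu)).1 rfl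
      exact Finset.erase_insert hiu

lemma prod_prod_emb (hp : 1 ≤ p) (d : Fin n → ℝ) :
    ∏ s : WedgeIdx n p, ∏ j : Fin p, d (emb s j)
      = ∏ i : Fin n, d i ^ Nat.choose (n - 1) (p - 1) := by
  classical
  have h1 : ∀ s : WedgeIdx n p, ∏ j : Fin p, d (emb s j) = ∏ i ∈ s.1, d i := by
    intro s
    rw [← emb_image s, Finset.prod_image (fun a _ b _ h => emb_injective s h)]
  simp only [h1]
  have h2 : ∀ s : WedgeIdx n p, ∏ i ∈ s.1, d i
      = ∏ i : Fin n, if i ∈ s.1 then d i else 1 := by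
    intro s
    rw [Finset.prod_ite_mem, Finset.univ_inter]
  simp only [h2]
  rw [Finset.prod_comm]
  refine Finset.prod_congr rfl fun i _ => ?_
  rw [← Finset.prod_filter (fun s : WedgeIdx n p => i ∈ s.1) (fun _ => d i),
    Finset.prod_const, count_mem hp i]

lemma cmpd_det_one_of_unitriangular (T : Matrix (Fin n) (Fin n) ℝ)
    (h : ∀ a b : Fin n, b < a → T a b = 0) (hd : ∀ a, T a a = 1) :
    (cmpd n p T).det = 1 := by
  rw [cmpd_det_of_ut T h]
  simp [hd]

lemma cmpd_transpose (M : Matrix (Fin n) (Fin n) ℝ) :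
    cmpd n p Mᵀ = (cmpd n p M)ᵀ := by
  ext s t
  show (Mᵀ.submatrix (emb s) (emb t)).det = (M.submatrix (emb t) (emb s)).det
  rw [← Matrix.transpose_submatrix, Matrix.det_transpose]

lemma cmpd_det_transvection (t : Matrix.TransvectionStruct (Fin n) ℝ) :
    (cmpd n p t.toMatrix).det = 1 := by
  rcases t with ⟨i, j, hij, c⟩
  rw [Matrix.TransvectionStruct.toMatrix_mk]
  have hentry : ∀ a b : Fin n, Matrix.transvection i j c a b
      = (if a = b then 1 else 0) + c * (if i = a ∧ j = b then (1:ℝ) else 0) := by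
    intro a b
    simp [Matrix.transvection, Matrix.single_apply, Matrix.one_apply]
  have hd : ∀ a, Matrix.transvection i j c a a = 1 := by
    intro a
    rw [hentry]
    have : ¬ (i = a ∧ j = a) := fun ⟨h1, h2⟩ => hij (h1.trans h2.symm)
    simp [this]
  rcases lt_or_gt_of_ne hij with hlt | hlt
  · refine cmpd_det_one_of_unitriangular _ (fun a b hba => ?_) hd
    rw [hentry]
    have h1 : a ≠ b := ne_of_gt hba
    have h2 : ¬ (i = a ∧ j = b) := by
      rintro ⟨rfl, rfl⟩
      exact absurd hba (not_lt.2 (le_of_lt hlt))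
    simp [h1, h2]
  · have := cmpd_det_one_of_unitriangular (p := p) (Matrix.transvection i j c)ᵀ
      (fun a b hba => ?_) (fun a => hd a)
    · rw [cmpd_transpose, Matrix.det_transpose] at this
      exact this
    · show Matrix.transvection i j c b a = 0
      rw [hentry]
      have h1 : b ≠ a := ne_of_lt hba
      have h2 : ¬ (i = b ∧ j = a) := by
        rintro ⟨rfl, rfl⟩
        exact absurd hba (not_lt.2 (le_of_lt hlt))
      simp [h1, h2]

lemma cmpd_det_transvec_list (L : List (Matrix.TransvectionStruct (Fin n) ℝ)) :
    (cmpd n p (L.map Matrix.TransvectionStruct.toMatrix).prod).det = 1 := by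
  induction L with
  | nil =>
      simp only [List.map_nil, List.prod_nil]
      exact cmpd_det_one_of_unitriangular _ (fun a b hba => Matrix.one_apply_ne (ne_of_gt hba))
        (fun a => Matrix.one_apply_eq a)
  | cons t L ih =>
      rw [List.map_cons, List.prod_cons, cmpd_mul, Matrix.det_mul, ih,
        cmpd_det_transvection, one_mul]

/-- Sylvester–Franke: the determinant of the `p`-th compound. -/
lemma cmpd_det_eq (hp : 1 ≤ p) (M : Matrix (Fin n) (Fin n) ℝ) :
    (cmpd n p M).det = M.det ^ Nat.choose (n - 1) (p - 1) := by
  obtain ⟨L, L', D, hM⟩ := Matrix.Pivot.exists_list_transvec_mul_diagonal_mul_list_transvec M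
  have hdiag : (cmpd n p (Matrix.diagonal D)).det
      = (Matrix.diagonal D).det ^ Nat.choose (n - 1) (p - 1) := by
    rw [cmpd_det_of_ut _ (fun a b hba => Matrix.diagonal_apply_ne' D (ne_of_lt hba))]
    simp only [Matrix.diagonal_apply_eq]
    rw [prod_prod_emb hp D, Matrix.det_diagonal, ← Finset.prod_pow]
  rw [hM, cmpd_mul, cmpd_mul, Matrix.det_mul, Matrix.det_mul,
    cmpd_det_transvec_list, cmpd_det_transvec_list, hdiag,
    Matrix.det_mul, Matrix.det_mul, Matrix.TransvectionStruct.det_toMatrix_prod, Matrix.TransvectionStruct.det_toMatrix_prod,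
    one_mul, mul_one, one_mul, mul_one]

end CompoundDet

namespace CompoundDet

lemma latticeOfI_eq_span {ι : Type*} [Fintype ι] (Wf : ι → ι → ℝ) :
    latticeOfI Wf = (Submodule.span ℤ (Set.range Wf) : Set (ι → ℝ)) := by
  ext x
  simp only [latticeOfI, Set.mem_setOf_eq, SetLike.mem_coe,
    Submodule.mem_span_range_iff_exists_fun]
  have key : ∀ z : ι → ℤ, (∑ i, z i • Wf i) = ∑ i, (z i : ℝ) • Wf i :=
    fun z => Finset.sum_congr rfl fun i _ => (Int.cast_smul_eq_zsmul ℝ (z i) (Wf i)).symm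
  constructor
  · rintro ⟨z, rfl⟩
    exact ⟨z, key z⟩
  · rintro ⟨z, rfl⟩
    exact ⟨z, key z⟩

lemma basis_row_mem (B : Fin n → Fin n → ℝ) (a : Fin n) : B a ∈ latticeOfI B := by
  refine ⟨fun j => if j = a then 1 else 0, ?_⟩
  simp only [apply_ite (fun r : ℤ => (r : ℝ)), Int.cast_one, Int.cast_zero, ite_smul,
    one_smul, zero_smul, Finset.sum_ite_eq', Finset.mem_univ, if_true]

lemma wedge_eq_cmpd_row (B : Fin n → Fin n → ℝ) (s : WedgeIdx n p) :
    wedge n p (fun i => B (emb s i)) = fun t => cmpd n p (Matrix.of B) s t := rfl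

/-- Expansion of a wedge of lattice vectors in terms of basis wedges. -/
lemma wedge_mem_span (B : Fin n → Fin n → ℝ) (v : Fin p → Fin n → ℝ)
    (hv : ∀ i, v i ∈ latticeOfI B) :
    wedge n p v ∈ Submodule.span ℤ
      (Set.range fun s : WedgeIdx n p => (cmpd n p (Matrix.of B) s ·)) := by
  choose z hz using hv
  set Zr : Matrix (Fin p) (Fin n) ℝ := Matrix.of fun i j => (z i j : ℝ) with hZr
  have hventry : ∀ i k, v i k = (Zr * Matrix.of B) i k := by
    intro i k
    rw [hz i]
    simp [Matrix.mul_apply, hZr]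
  have hwedge : ∀ s : WedgeIdx n p,
      wedge n p v s = ((Zr * Matrix.of B).submatrix id (emb s)).det := by
    intro s
    unfold wedge
    congr 1
    ext i j
    exact hventry i (emb s j)
  set c : WedgeIdx n p → ℤ :=
    fun t => ((Matrix.of z).submatrix id (emb t)).det with hc
  have hcast : ∀ t : WedgeIdx n p,
      ((c t : ℤ) : ℝ) = (Zr.submatrix id (emb t)).det := by
    intro t
    have h := RingHom.map_det (Int.castRingHom ℝ) ((Matrix.of z).submatrix id (emb t))
    have h2 : ((Matrix.of z).submatrix id (emb t)).map (Int.castRingHom ℝ)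
        = Zr.submatrix id (emb t) := by
      ext i j
      simp [hZr]
    rw [RingHom.mapMatrix_apply, h2] at h
    rw [hc]
    exact h
  have hexp : wedge n p v = ∑ t : WedgeIdx n p,
      c t • (fun s => cmpd n p (Matrix.of B) t s) := by
    funext s
    rw [hwedge s]
    have hsub : (Zr * Matrix.of B).submatrix id (emb s)
        = Zr * (Matrix.of B).submatrix id (emb s) := by
      have := Matrix.submatrix_mul Zr (Matrix.of B) id id (emb s) Function.bijective_id
      simpa using this
    rw [hsub, cauchyBinet]
    rw [Finset.sum_apply]
    refine Finset.sum_congr rfl fun t _ => ?_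
    have h1 : ((Matrix.of B).submatrix id (emb s)).submatrix (emb t) id
        = (Matrix.of B).submatrix (emb t) (emb s) := by
      rw [Matrix.submatrix_submatrix]
      rfl
    rw [h1]
    show (Zr.submatrix id (emb t)).det * cmpd n p (Matrix.of B) t s
      = (c t • fun s => cmpd n p (Matrix.of B) t s) s
    rw [Pi.smul_apply, zsmul_eq_mul, hcast t]
  rw [hexp]
  exact Submodule.sum_mem _ fun t _ => Submodule.smul_mem _ _
    (Submodule.subset_span ⟨t, rfl⟩)

end CompoundDet


open CompoundDet in
/-- Determinant of compound lattices: `d(Λ_p) = d(Λ)^P` with `P = C(n-1,p-1)`: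
the compound lattice has a basis whose determinant has the right absolute
value. -/
theorem compound_lattice_det
    (n p : ℕ) (hp : 1 ≤ p) (hpn : p ≤ n - 1)
    (B : Fin n → Fin n → ℝ) (hB : (Matrix.of B).det ≠ 0) :
    ∃ W : WedgeIdx n p → WedgeIdx n p → ℝ,
      compoundLattice n p (latticeOfI B) = latticeOfI W ∧
      |(Matrix.of W).det| = |(Matrix.of B).det| ^ (Nat.choose (n - 1) (p - 1)) := by
  classical
  refine ⟨fun s t => cmpd n p (Matrix.of B) s t, ?_, ?_⟩
  · have hspan : Submodule.span ℤ
        {w : WedgeIdx n p → ℝ | ∃ v : Fin p → Fin n → ℝ,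
          (∀ i, v i ∈ latticeOfI B) ∧ w = wedge n p v}
        = Submodule.span ℤ
            (Set.range fun s : WedgeIdx n p => (cmpd n p (Matrix.of B) s ·)) := by
      apply le_antisymm
      · rw [Submodule.span_le]
        rintro w ⟨v, hv, rfl⟩
        exact wedge_mem_span B v hv
      · rw [Submodule.span_le]
        rintro w ⟨s, rfl⟩
        apply Submodule.subset_span
        exact ⟨fun i => B (emb s i), fun i => basis_row_mem B (emb s i),
          (wedge_eq_cmpd_row B s).symm⟩
    show compoundLattice n p (latticeOfI B) = _
    rw [compoundLattice, hspan, latticeOfI_eq_span]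
  · have h1 : Matrix.of (fun s t => cmpd n p (Matrix.of B) s t)
        = cmpd n p (Matrix.of B) := rfl
    rw [h1, cmpd_det_eq hp, abs_pow]
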